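/- Let ρ be a d×d complex positive semidefinite matrix and w a d×d unitary matrix such that ρ·(w·ρ·wᴴ) = 0. Then twice the rank of ρ is at most d: 2 · ρ.rank ≤ d. -/

import Mathlib

open Matrix ComplexOrder

/-- If `ρ` is positive semidefinite, `w` is unitary, and the strict orthogonality
condition `ρ * (w * ρ * wᴴ) = 0` holds, then twice the rank of `ρ` is at most `d`. -/
theorem stmt_5 {d : ℕ} (ρ w : Matrix (Fin d) (Fin d) ℂ)
    (hρ : ρ.PosSemidef) (hw : wᴴ * w = 1)
    (horth : ρ * (w * ρ * wᴴ) = 0) :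
    2 * ρ.rank ≤ d := by
  have hdet : IsUnit w.det := by
    apply IsUnit.of_mul_eq_one (a := w.det) wᴴ.det
    rw [mul_comm, ← Matrix.det_mul, hw, Matrix.det_one]
  have hdetH : IsUnit wᴴ.det := by
    apply IsUnit.of_mul_eq_one (a := wᴴ.det) w.det
    rw [← Matrix.det_mul, hw, Matrix.det_one]
  have hrank : (w * ρ * wᴴ).rank = ρ.rank := by
    rw [Matrix.rank_mul_eq_left_of_isUnit_det wᴴ (w * ρ) hdetH,
      Matrix.rank_mul_eq_right_of_isUnit_det w ρ hdet]
  have hsub : LinearMap.range (w * ρ * wᴴ).mulVecLin ≤ LinearMap.ker ρ.mulVecLin := by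
    rintro x ⟨y, rfl⟩
    simp only [LinearMap.mem_ker, Matrix.mulVecLin_apply, Matrix.mulVec_mulVec, horth,
      Matrix.zero_mulVec]
  have hle : (w * ρ * wᴴ).rank ≤ Module.finrank ℂ (LinearMap.ker ρ.mulVecLin) :=
    Submodule.finrank_mono hsub
  have hsum := LinearMap.finrank_range_add_finrank_ker ρ.mulVecLin
  simp only [Module.finrank_fin_fun] at hsum
  have hsum' : ρ.rank + Module.finrank ℂ (LinearMap.ker ρ.mulVecLin) = d := hsum
  omega
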